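/- Pseudo-dual frames have the same excess: if (f_n) and (g_n) are frames in H with analysis operators U and V such that V*U is invertible in B(H), then dim(Ker U*) = dim(Ker V*). -/

import Mathlib

open scoped InnerProductSpace

noncomputable section

abbrev ell2 : Type := lp (fun _ : ℕ => ℂ) 2

def IsFrame {H : Type*} [NormedAddCommGroup H] [InnerProductSpace ℂ H]
    (f : ℕ → H) : Prop :=
  ∃ A B : ℝ, 0 < A ∧ 0 < B ∧ ∀ x : H,
    A * ‖x‖ ^ 2 ≤ ∑' n, ‖⟪x, f n⟫_ℂ‖ ^ 2 ∧ ∑' n, ‖⟪x, f n⟫_ℂ‖ ^ 2 ≤ B * ‖x‖ ^ 2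

def IsAnalysisOp {H : Type*} [NormedAddCommGroup H] [InnerProductSpace ℂ H]
    (f : ℕ → H) (U : H →L[ℂ] ell2) : Prop :=
  ∀ (x : H) (n : ℕ), (U x : ∀ _ : ℕ, ℂ) n = ⟪x, f n⟫_ℂ

/-- The kernel of the adjoint is the orthogonal complement of the range. -/
lemma ker_adjoint_eq_orthogonal_range
    {H K : Type*} [NormedAddCommGroup H] [InnerProductSpace ℂ H] [CompleteSpace H]
    [NormedAddCommGroup K] [InnerProductSpace ℂ K] [CompleteSpace K]
    (U : H →L[ℂ] K) :
    LinearMap.ker (ContinuousLinearMap.adjoint U : K →ₗ[ℂ] H) = (LinearMap.range (U : H →ₗ[ℂ] K))ᗮ := by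
  ext x
  simp only [LinearMap.mem_ker, Submodule.mem_orthogonal]
  constructor
  · rintro h _ ⟨y, rfl⟩
    rw [ContinuousLinearMap.coe_coe, ← ContinuousLinearMap.adjoint_inner_right]
    simp [show (ContinuousLinearMap.adjoint U) x = 0 from h]
  · intro h
    rw [← inner_self_eq_zero (𝕜 := ℂ)]
    simp only [ContinuousLinearMap.coe_coe]
    rw [ContinuousLinearMap.adjoint_inner_left]
    rw [inner_eq_zero_symm]
    exact h _ (LinearMap.mem_range_self (U : H →ₗ[ℂ] K) _)

set_option maxHeartbeats 1000000 in
/-- Pseudo-dual frames have the same excess. -/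
theorem pseudo_dual_frames_same_excess
    {H : Type*} [NormedAddCommGroup H] [InnerProductSpace ℂ H] [CompleteSpace H]
    (f g : ℕ → H) (hf : IsFrame f) (hg : IsFrame g)
    (U V : H →L[ℂ] ell2) (hU : IsAnalysisOp f U) (hV : IsAnalysisOp g V)
    (hpd : IsUnit ((ContinuousLinearMap.adjoint V) ∘L U)) :
    Module.rank ℂ (LinearMap.ker (ContinuousLinearMap.adjoint U : ell2 →ₗ[ℂ] H)) =
      Module.rank ℂ (LinearMap.ker (ContinuousLinearMap.adjoint V : ell2 →ₗ[ℂ] H)) := by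
  obtain ⟨u, hu⟩ := hpd
  set T : H →L[ℂ] H := (ContinuousLinearMap.adjoint V) ∘L U with hT
  set S : H →L[ℂ] H := ↑u⁻¹ with hS
  have hST : ∀ x : H, S (T x) = x := by
    intro x
    have : (S * T) x = (1 : H →L[ℂ] H) x := by rw [hS, ← hu, u.inv_mul]
    simpa using this
  have hTS : ∀ x : H, T (S x) = x := by
    intro x
    have : (T * S) x = (1 : H →L[ℂ] H) x := by rw [hS, ← hu, u.mul_inv]
    simpa using this
  -- U is bounded below, hence has closed (complete) range
  have hanti : AntilipschitzWith ‖S ∘L (ContinuousLinearMap.adjoint V)‖₊ U := by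
    apply U.antilipschitz_of_bound
    intro x
    calc ‖x‖ = ‖(S ∘L (ContinuousLinearMap.adjoint V)) (U x)‖ := by
              simp only [ContinuousLinearMap.comp_apply]
              rw [show S ((ContinuousLinearMap.adjoint V) (U x)) = x from hST x]
      _ ≤ ‖S ∘L (ContinuousLinearMap.adjoint V)‖₊ * ‖U x‖ :=
          (S ∘L (ContinuousLinearMap.adjoint V)).le_opNorm (U x)
  haveI : CompleteSpace (LinearMap.range (U : H →ₗ[ℂ] ell2)) :=
    hanti.completeSpace_range_clm
  -- the orthogonal decomposition
  have hcompl1 : IsCompl (LinearMap.range (U : H →ₗ[ℂ] ell2)) (LinearMap.range (U : H →ₗ[ℂ] ell2))ᗮ :=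
    Submodule.isCompl_orthogonal_of_hasOrthogonalProjection
  -- the oblique decomposition: range U ⊕ ker V* = ell2
  have hcompl2 : IsCompl (LinearMap.range (U : H →ₗ[ℂ] ell2))
      (LinearMap.ker (ContinuousLinearMap.adjoint V : ell2 →ₗ[ℂ] H)) := by
    constructor
    · rw [Submodule.disjoint_def]
      rintro x ⟨y, rfl⟩ hker
      have : T y = 0 := by
        simpa [hT] using (LinearMap.mem_ker.mp hker)
      have := congrArg S this
      rw [hST y] at this
      simp [this]
    · rw [codisjoint_iff, eq_top_iff]
      rintro z -
      refine Submodule.mem_sup.mpr ⟨U (S ((ContinuousLinearMap.adjoint V) z)),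
        LinearMap.mem_range_self (U : H →ₗ[ℂ] ell2) _,
        z - U (S ((ContinuousLinearMap.adjoint V) z)), ?_, by abel⟩
      rw [LinearMap.mem_ker]
      have : (ContinuousLinearMap.adjoint V)
          (U (S ((ContinuousLinearMap.adjoint V) z))) =
          T (S ((ContinuousLinearMap.adjoint V) z)) := rfl
      rw [map_sub, ContinuousLinearMap.coe_coe, this, hTS, sub_self]
  -- assemble the linear equivalences
  have e1 : ((LinearMap.range (U : H →ₗ[ℂ] ell2))ᗮ : Submodule ℂ ell2) ≃ₗ[ℂ]
      (ell2 ⧸ LinearMap.range (U : H →ₗ[ℂ] ell2)) :=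
    (Submodule.quotientEquivOfIsCompl _ _ hcompl1).symm
  have e2 : (ell2 ⧸ LinearMap.range (U : H →ₗ[ℂ] ell2)) ≃ₗ[ℂ]
      LinearMap.ker (ContinuousLinearMap.adjoint V : ell2 →ₗ[ℂ] H) :=
    Submodule.quotientEquivOfIsCompl _ _ hcompl2
  rw [ker_adjoint_eq_orthogonal_range U]
  exact (e1.trans e2).rank_eq
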